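/- Let n ≥ 1 and let P, Q, R be probability distributions on Fin n (nonnegative real vectors summing to 1). For every real α with 0 < α ≤ 1/2, the quantity d_α(P,Q) = (D_JS(P,Q))^α is a metric; that is: (i) d_α(P,Q) ≥ 0; (ii) d_α(P,Q) = 0 if and only if P = Q; (iii) d_α(P,Q) = d_α(Q,P); and (iv) d_α(P,Q) ≤ d_α(P,R) + d_α(R,Q). -/

import Mathlib

noncomputable def shannonH {n : ℕ} (p : Fin n → ℝ) : ℝ :=
  -∑ i, p i * Real.logb 2 (p i)

noncomputable def DJS {n : ℕ} (p q : Fin n → ℝ) : ℝ :=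
  shannonH (fun i => (p i + q i) / 2) - (1 / 2) * shannonH p - (1 / 2) * shannonH q

noncomputable def dAlpha {n : ℕ} (α : ℝ) (p q : Fin n → ℝ) : ℝ :=
  (DJS p q) ^ α

noncomputable def phiF (a b : ℝ) : ℝ :=
  a * Real.log (2*a/(a+b)) + b * Real.log (2*b/(a+b))

lemma phiF_symm (a b : ℝ) : phiF a b = phiF b a := by
  unfold phiF; rw [add_comm a b]; ring

lemma phiF_self (a : ℝ) : phiF a a = 0 := by
  unfold phiF
  rcases eq_or_ne a 0 with h | h
  · norm_num [h]
  · have h2 : 2*a/(a+a) = 1 := by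
      rw [show a+a = 2*a by ring, div_self (mul_ne_zero two_ne_zero h)]
    simp [h2]

lemma phiF_zero (b : ℝ) : phiF 0 b = b * Real.log 2 := by
  unfold phiF
  rcases eq_or_ne b 0 with h | h
  · simp [h]
  · rw [zero_add]
    simp only [mul_zero, zero_div, Real.log_zero, zero_mul, zero_add]
    rw [mul_div_assoc, div_self h, mul_one]

lemma phiF_eq_pos {a b : ℝ} (ha : 0 < a) (hb : 0 < b) :
    phiF a b = a * Real.log a + b * Real.log b - (a+b) * Real.log ((a+b)/2) := by
  unfold phiF
  have hab : (0:ℝ) < a + b := by linarith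
  have l1 : Real.log (2*a/(a+b)) = Real.log 2 + Real.log a - Real.log (a+b) := by
    rw [Real.log_div (by positivity) hab.ne', Real.log_mul two_ne_zero ha.ne']
  have l2 : Real.log (2*b/(a+b)) = Real.log 2 + Real.log b - Real.log (a+b) := by
    rw [Real.log_div (by positivity) hab.ne', Real.log_mul two_ne_zero hb.ne']
  have l3 : Real.log ((a+b)/2) = Real.log (a+b) - Real.log 2 := by
    rw [Real.log_div hab.ne' two_ne_zero]
  rw [l1, l2, l3]; ring

lemma phiF_pos {a b : ℝ} (ha : 0 ≤ a) (hb : 0 ≤ b) (hne : a ≠ b) : 0 < phiF a b := by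
  rcases ha.eq_or_lt with rfl | ha'
  · have hb' : 0 < b := lt_of_le_of_ne hb fun hh => hne (hh ▸ rfl)
    rw [phiF_zero]
    exact mul_pos hb' (Real.log_pos one_lt_two)
  rcases hb.eq_or_lt with rfl | hb'
  · rw [phiF_symm, phiF_zero]
    exact mul_pos ha' (Real.log_pos one_lt_two)
  have hab : (0:ℝ) < a + b := by linarith
  have e1 : Real.log (2*a/(a+b)) = -Real.log ((a+b)/(2*a)) := by
    rw [← Real.log_inv, inv_div]
  have e2 : Real.log (2*b/(a+b)) = -Real.log ((a+b)/(2*b)) := by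
    rw [← Real.log_inv, inv_div]
  have h1 : Real.log ((a+b)/(2*a)) < (a+b)/(2*a) - 1 := by
    apply Real.log_lt_sub_one_of_pos (by positivity)
    intro hcon
    apply hne
    field_simp at hcon
    linarith
  have h2 : Real.log ((a+b)/(2*b)) ≤ (a+b)/(2*b) - 1 :=
    Real.log_le_sub_one_of_pos (by positivity)
  have c1 : a * ((a+b)/(2*a)) = (a+b)/2 := by field_simp
  have c2 : b * ((a+b)/(2*b)) = (a+b)/2 := by field_simp
  unfold phiF
  rw [e1, e2]
  nlinarith [mul_lt_mul_of_pos_left h1 ha', mul_le_mul_of_nonneg_left h2 hb'.le]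

lemma phiF_nonneg {a b : ℝ} (ha : 0 ≤ a) (hb : 0 ≤ b) : 0 ≤ phiF a b := by
  rcases eq_or_ne a b with rfl | h
  · rw [phiF_self]
  · exact (phiF_pos ha hb h).le

lemma phiF_smul {s a b : ℝ} (hs : 0 < s) (ha : 0 < a) (hb : 0 < b) :
    phiF (s*a) (s*b) = s * phiF a b := by
  unfold phiF
  have hab : a + b ≠ 0 := by positivity
  have h1 : 2*(s*a)/(s*a+s*b) = 2*a/(a+b) := by field_simp
  have h2 : 2*(s*b)/(s*a+s*b) = 2*b/(a+b) := by field_simp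
  rw [h1, h2]; ring

lemma hasDerivAt_phiF {a : ℝ} (ha : 0 < a) {b : ℝ} (hb : 0 < b) :
    HasDerivAt (fun x => phiF a x) (Real.log (2*b/(a+b))) b := by
  have hab : (0:ℝ) < a + b := by linarith
  have hG : HasDerivAt
      (fun x => (a+x)*Real.log 2 + a*Real.log a + x*Real.log x - (a+x)*Real.log (a+x))
      (Real.log (2*b/(a+b))) b := by
    have h1 : HasDerivAt (fun x : ℝ => (a+x)*Real.log 2) (Real.log 2) b := by
      simpa using ((hasDerivAt_id b).const_add a).mul_const (Real.log 2)
    have h3 : HasDerivAt (fun x : ℝ => x*Real.log x) (Real.log b + 1) b :=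
      Real.hasDerivAt_mul_log hb.ne'
    have h4 : HasDerivAt (fun x : ℝ => (a+x)*Real.log (a+x)) (Real.log (a+b) + 1) b := by
      have inner : HasDerivAt (fun x : ℝ => a + x) 1 b := (hasDerivAt_id b).const_add a
      simpa [Function.comp_def] using (Real.hasDerivAt_mul_log hab.ne').comp b inner
    have := ((h1.add_const (a*Real.log a)).add h3).sub h4
    refine this.congr_deriv ?_
    rw [Real.log_div (by positivity) hab.ne', Real.log_mul two_ne_zero hb.ne']
    ring
  apply hG.congr_of_eventuallyEq
  filter_upwards [eventually_gt_nhds hb] with x hx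
  rw [phiF_eq_pos ha hx, Real.log_div (by linarith : a + x ≠ 0) two_ne_zero]
  ring

lemma hasDerivAt_phiF_left {c : ℝ} (hc : 0 < c) {w : ℝ} (hw : 0 < w) :
    HasDerivAt (fun w => phiF w c) (Real.log (2*w/(w+c))) w := by
  have : (fun w => phiF w c) = fun w => phiF c w := funext fun w => phiF_symm w c
  rw [this, add_comm w c]
  exact hasDerivAt_phiF hc hw

lemma phiF_left_eq {c : ℝ} (hc : 0 < c) {w : ℝ} (hw : 0 ≤ w) :
    phiF w c = w*Real.log 2 + w*Real.log w - (w+c)*Real.log (w+c)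
      + (c*Real.log 2 + c*Real.log c) := by
  rcases hw.eq_or_lt with rfl | hw'
  · rw [phiF_zero]; ring_nf
  · rw [phiF_eq_pos hw' hc, Real.log_div (by positivity : w + c ≠ 0) two_ne_zero]
    ring

lemma phiF_contOn_left {c : ℝ} (hc : 0 < c) :
    ContinuousOn (fun w => phiF w c) (Set.Ici (0:ℝ)) := by
  have hform : ContinuousOn
      (fun w : ℝ => w*Real.log 2 + w*Real.log w - (w+c)*Real.log (w+c)
        + (c*Real.log 2 + c*Real.log c)) (Set.Ici (0:ℝ)) := by
    apply ContinuousOn.add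
    apply ContinuousOn.sub
    · exact ((continuous_id.mul continuous_const).add Real.continuous_mul_log).continuousOn
    · intro w hw
      have hwc : w + c ≠ 0 := by simp only [Set.mem_Ici] at hw; positivity
      have h1 : ContinuousAt (fun w : ℝ => w + c) w := by fun_prop
      exact (h1.mul (h1.log hwc)).continuousWithinAt
    · exact continuousOn_const
  exact hform.congr fun w hw => phiF_left_eq hc hw

lemma phiF_mono_right {a : ℝ} (ha : 0 < a) :
    MonotoneOn (fun b => phiF a b) (Set.Ici a) := by
  apply monotoneOn_of_deriv_nonneg (convex_Ici a)
  · intro b hb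
    exact (hasDerivAt_phiF ha (ha.trans_le hb)).continuousAt.continuousWithinAt
  · intro b hb
    rw [interior_Ici] at hb
    exact (hasDerivAt_phiF ha (ha.trans hb)).differentiableAt.differentiableWithinAt
  · intro b hb
    rw [interior_Ici] at hb
    have hb' : 0 < b := ha.trans hb
    rw [(hasDerivAt_phiF ha hb').deriv]
    apply Real.log_nonneg
    rw [le_div_iff₀ (by linarith : (0:ℝ) < a + b)]
    linarith [(Set.mem_Ioi.mp hb).le]

lemma phiF_anti_left {c : ℝ} (hc : 0 < c) :
    AntitoneOn (fun w => phiF w c) (Set.Icc 0 c) := by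
  apply antitoneOn_of_deriv_nonpos (convex_Icc 0 c)
  · exact (phiF_contOn_left hc).mono (Set.Icc_subset_Ici_self)
  · intro w hw
    rw [interior_Icc] at hw
    exact (hasDerivAt_phiF_left hc hw.1).differentiableAt.differentiableWithinAt
  · intro w hw
    rw [interior_Icc] at hw
    rw [(hasDerivAt_phiF_left hc hw.1).deriv]
    apply Real.log_nonpos (div_nonneg (by linarith [hw.1]) (by linarith [hw.1]))
    rw [div_le_one (by linarith [hw.1] : (0:ℝ) < w + c)]
    linarith [hw.2]

lemma k_fun_nonneg {t : ℝ} (ht : t ∈ Set.Ico (0:ℝ) 1) :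
    0 ≤ (1+t)*Real.log (1+t) + (1-t)*Real.log (1-t) := by
  set k : ℝ → ℝ := fun t => (1+t)*Real.log (1+t) + (1-t)*Real.log (1-t) with hk
  have hder : ∀ s ∈ Set.Ico (0:ℝ) 1,
      HasDerivAt k (Real.log (1+s) - Real.log (1-s)) s := by
    intro s hs
    have h1s : (0:ℝ) < 1 + s := by linarith [hs.1]
    have h2s : (0:ℝ) < 1 - s := by linarith [hs.2]
    have d1 : HasDerivAt (fun t : ℝ => (1+t)*Real.log (1+t)) (Real.log (1+s) + 1) s := by
      have inner : HasDerivAt (fun t : ℝ => 1 + t) 1 s := (hasDerivAt_id s).const_add 1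
      simpa [Function.comp_def] using (Real.hasDerivAt_mul_log h1s.ne').comp s inner
    have d2 : HasDerivAt (fun t : ℝ => (1-t)*Real.log (1-t)) (-(Real.log (1-s) + 1)) s := by
      have inner : HasDerivAt (fun t : ℝ => 1 - t) (-1) s := (hasDerivAt_id s).const_sub 1
      have := (Real.hasDerivAt_mul_log h2s.ne').comp s inner
      simpa [Function.comp_def] using this
    have := d1.add d2
    refine this.congr_deriv ?_; ring
  have hmono : MonotoneOn k (Set.Ico (0:ℝ) 1) := by
    apply monotoneOn_of_deriv_nonneg (convex_Ico 0 1)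
    · intro s hs; exact (hder s hs).continuousAt.continuousWithinAt
    · intro s hs
      rw [interior_Ico] at hs
      exact (hder s ⟨hs.1.le, hs.2⟩).differentiableAt.differentiableWithinAt
    · intro s hs
      rw [interior_Ico] at hs
      rw [(hder s ⟨hs.1.le, hs.2⟩).deriv]
      have : Real.log (1-s) ≤ Real.log (1+s) :=
        Real.log_le_log (by linarith [hs.2]) (by linarith [hs.1.le])
      linarith
  have h0 : k 0 = 0 := by simp [hk]
  have := hmono (by constructor <;> norm_num) ht ht.1
  rw [h0] at this
  exact this

lemma h_fun_ineq {t : ℝ} (ht : t ∈ Set.Ico (0:ℝ) 1) :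
    (1-t)*Real.log (1-t) + (1+t)*Real.log (1+t)
      ≤ (-Real.log (1-t)) * Real.log (1+t) := by
  set H : ℝ → ℝ := fun t => (-Real.log (1-t)) * Real.log (1+t)
    - ((1-t)*Real.log (1-t) + (1+t)*Real.log (1+t)) with hH
  have hder : ∀ s ∈ Set.Ico (0:ℝ) 1,
      HasDerivAt H (Real.log (1+s)/(1-s) - Real.log (1-s)/(1+s)
        + Real.log (1-s) - Real.log (1+s)) s := by
    intro s hs
    have h1s : (0:ℝ) < 1 + s := by linarith [hs.1]
    have h2s : (0:ℝ) < 1 - s := by linarith [hs.2]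
    have innerp : HasDerivAt (fun t : ℝ => 1 + t) 1 s := (hasDerivAt_id s).const_add 1
    have innerm : HasDerivAt (fun t : ℝ => 1 - t) (-1) s := (hasDerivAt_id s).const_sub 1
    have dlm : HasDerivAt (fun t : ℝ => Real.log (1-t)) (-(1-s)⁻¹) s := by
      simpa [Function.comp_def] using (Real.hasDerivAt_log h2s.ne').comp s innerm
    have dlp : HasDerivAt (fun t : ℝ => Real.log (1+t)) ((1+s)⁻¹) s := by
      simpa [Function.comp_def] using (Real.hasDerivAt_log h1s.ne').comp s innerp
    have d1 : HasDerivAt (fun t : ℝ => (-Real.log (1-t)) * Real.log (1+t))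
        ((1-s)⁻¹ * Real.log (1+s) + (-Real.log (1-s)) * (1+s)⁻¹) s :=
      (dlm.neg.mul dlp).congr_deriv (by simp only [Pi.neg_apply]; ring)
    have d2 : HasDerivAt (fun t : ℝ => (1-t)*Real.log (1-t)) (-(Real.log (1-s) + 1)) s := by
      simpa [Function.comp_def] using (Real.hasDerivAt_mul_log h2s.ne').comp s innerm
    have d3 : HasDerivAt (fun t : ℝ => (1+t)*Real.log (1+t)) (Real.log (1+s) + 1) s := by
      simpa [Function.comp_def] using (Real.hasDerivAt_mul_log h1s.ne').comp s innerp
    have := d1.sub (d2.add d3)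
    refine this.congr_deriv ?_
    field_simp
    ring
  have hmono : MonotoneOn H (Set.Ico (0:ℝ) 1) := by
    apply monotoneOn_of_deriv_nonneg (convex_Ico 0 1)
    · intro s hs; exact (hder s hs).continuousAt.continuousWithinAt
    · intro s hs
      rw [interior_Ico] at hs
      exact (hder s ⟨hs.1.le, hs.2⟩).differentiableAt.differentiableWithinAt
    · intro s hs
      rw [interior_Ico] at hs
      rw [(hder s ⟨hs.1.le, hs.2⟩).deriv]
      have h1s : (0:ℝ) < 1 + s := by linarith [hs.1]
      have h2s : (0:ℝ) < 1 - s := by linarith [hs.2]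
      have key : Real.log (1+s)/(1-s) - Real.log (1-s)/(1+s)
          + Real.log (1-s) - Real.log (1+s)
          = s * ((1+s)*Real.log (1+s) + (1-s)*Real.log (1-s)) / ((1-s)*(1+s)) := by
        field_simp
        ring
      rw [key]
      have hk := k_fun_nonneg ⟨hs.1.le, hs.2⟩
      exact div_nonneg (mul_nonneg hs.1.le hk) (mul_pos h2s h1s).le
  have h0 : H 0 = 0 := by simp [hH]
  have := hmono (by constructor <;> norm_num) ht ht.1
  rw [h0] at this
  simp only [hH] at this
  linarith

lemma key_ineq {a b : ℝ} (ha : 0 < a) (hab : a < b) :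
    2 * phiF a b ≤ (a+b) * (Real.log ((a+b)/(2*a)) * Real.log (2*b/(a+b))) := by
  have habp : (0:ℝ) < a + b := by linarith
  set s : ℝ := (a+b)/2 with hs_def
  set t : ℝ := (b-a)/(a+b) with ht_def
  have hs : 0 < s := by rw [hs_def]; linarith
  have ht0 : 0 ≤ t := by rw [ht_def]; exact div_nonneg (by linarith) habp.le
  have ht1 : t < 1 := by
    rw [ht_def, div_lt_one habp]; linarith
  have h1t : (0:ℝ) < 1 - t := by linarith
  have h1t' : (0:ℝ) < 1 + t := by linarith
  have hst : s * t = (b-a)/2 := by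
    rw [hs_def, ht_def]; field_simp
  have hA : a = s*(1-t) := by rw [mul_sub, mul_one, hst, hs_def]; ring
  have hB : b = s*(1+t) := by rw [mul_add, mul_one, hst, hs_def]; ring
  have e1 : phiF a b = s * ((1-t)*Real.log (1-t) + (1+t)*Real.log (1+t)) := by
    rw [hA, hB, phiF_smul hs h1t h1t']
    congr 1
    unfold phiF
    rw [show (1-t)+(1+t) = (2:ℝ) by ring,
        show 2*(1-t)/2 = 1-t by ring, show 2*(1+t)/2 = 1+t by ring]
  have e2 : a + b = 2*s := by rw [hs_def]; ring
  have h1t_eq : 1 - t = a/s := (eq_div_iff hs.ne').2 (by rw [hA]; ring)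
  have h1t_eq' : 1 + t = b/s := (eq_div_iff hs.ne').2 (by rw [hB]; ring)
  have e3 : Real.log ((a+b)/(2*a)) = -Real.log (1-t) := by
    rw [e2, h1t_eq, ← Real.log_inv, inv_div,
        show (2:ℝ)*s/(2*a) = s/a from mul_div_mul_left _ _ two_ne_zero]
  have e4 : Real.log (2*b/(a+b)) = Real.log (1+t) := by
    rw [e2, h1t_eq',
        show (2:ℝ)*b/(2*s) = b/s from mul_div_mul_left _ _ two_ne_zero]
  rw [e1, e3, e4, e2]
  have hkey := h_fun_ineq ⟨ht0, ht1⟩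
  have := mul_le_mul_of_nonneg_left hkey hs.le
  linarith

lemma sqrt_phiF_hasDeriv {a b : ℝ} (ha : 0 < a) (hab : a < b) :
    HasDerivAt (fun x => Real.sqrt (phiF a x))
      (Real.log (2*b/(a+b)) / (2*Real.sqrt (phiF a b))) b := by
  have hφ : 0 < phiF a b := phiF_pos ha.le (ha.trans hab).le hab.ne
  have := (Real.hasDerivAt_sqrt hφ.ne').comp b (hasDerivAt_phiF ha (ha.trans hab))
  refine this.congr_deriv ?_
  ring

lemma quot_anti {a y z : ℝ} (ha : 0 < a) (hy : a < y) (hyz : y ≤ z) :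
    Real.log ((a+z)/(2*a)) / Real.sqrt (phiF a z)
      ≤ Real.log ((a+y)/(2*a)) / Real.sqrt (phiF a y) := by
  rcases hyz.eq_or_lt with rfl | hyz'
  · exact le_refl _
  have key : AntitoneOn (fun b => Real.log ((a+b)/(2*a)) / Real.sqrt (phiF a b))
      (Set.Icc y z) := by
    have deriv_at : ∀ b ∈ Set.Icc y z,
        HasDerivAt (fun b => Real.log ((a+b)/(2*a)) / Real.sqrt (phiF a b))
          (((a+b)⁻¹ * Real.sqrt (phiF a b)
            - Real.log ((a+b)/(2*a)) * (Real.log (2*b/(a+b)) / (2*Real.sqrt (phiF a b))))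
            / (Real.sqrt (phiF a b))^2) b := by
      intro b hb
      have hab : a < b := hy.trans_le hb.1
      have hbpos : 0 < b := ha.trans hab
      have habp : (0:ℝ) < a + b := by linarith
      have hφ : 0 < phiF a b := phiF_pos ha.le hbpos.le hab.ne
      have hsq : 0 < Real.sqrt (phiF a b) := Real.sqrt_pos.2 hφ
      have hN : HasDerivAt (fun x => Real.log ((a+x)/(2*a))) ((a+b)⁻¹) b := by
        have inner : HasDerivAt (fun x : ℝ => (a+x)/(2*a)) ((2*a)⁻¹) b := by
          simpa using (((hasDerivAt_id b).const_add a).div_const (2*a))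
        have harg : (a+b)/(2*a) ≠ 0 := by positivity
        have := inner.log harg
        refine this.congr_deriv ?_
        field_simp
      exact hN.div (sqrt_phiF_hasDeriv ha hab) hsq.ne'
    apply antitoneOn_of_deriv_nonpos (convex_Icc y z)
    · intro b hb; exact (deriv_at b hb).continuousAt.continuousWithinAt
    · intro b hb
      rw [interior_Icc] at hb
      exact (deriv_at b (Set.mem_Icc_of_Ioo hb)).differentiableAt.differentiableWithinAt
    · intro b hb
      rw [interior_Icc] at hb
      have hb' := Set.mem_Icc_of_Ioo hb
      rw [(deriv_at b hb').deriv]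
      have hab : a < b := hy.trans_le hb'.1
      have hbpos : 0 < b := ha.trans hab
      have habp : (0:ℝ) < a + b := by linarith
      have hφ : 0 < phiF a b := phiF_pos ha.le hbpos.le hab.ne
      have hsq : 0 < Real.sqrt (phiF a b) := Real.sqrt_pos.2 hφ
      have hss : Real.sqrt (phiF a b) * Real.sqrt (phiF a b) = phiF a b :=
        Real.mul_self_sqrt hφ.le
      apply div_nonpos_of_nonpos_of_nonneg _ (sq_nonneg _)
      rw [sub_nonpos]
      have hK := key_ineq ha hab
      have hL : 0 ≤ Real.log ((a+b)/(2*a)) := by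
        apply Real.log_nonneg
        rw [le_div_iff₀ (by positivity)]
        linarith
      have hM : 0 ≤ Real.log (2*b/(a+b)) := by
        apply Real.log_nonneg
        rw [le_div_iff₀ habp]
        linarith
      rw [inv_mul_eq_div, mul_div_assoc', div_le_div_iff₀ habp (by positivity)]
      nlinarith [hss]
  exact key (Set.left_mem_Icc.2 hyz'.le) (Set.right_mem_Icc.2 hyz'.le) hyz'.le

lemma sqrt_phiF_triangle_aux {x y z : ℝ} (hx : 0 ≤ x) (hy : 0 ≤ y) (hz : 0 ≤ z)
    (hxz : x ≤ z) :
    Real.sqrt (phiF x z) ≤ Real.sqrt (phiF x y) + Real.sqrt (phiF y z) := by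
  rcases le_or_gt y x with h | h
  · -- y ≤ x ≤ z : φ(x,z) ≤ φ(y,z)
    rcases hz.eq_or_lt with rfl | hz'
    · have hx0 : x = 0 := le_antisymm hxz hx
      have hy0 : y = 0 := le_antisymm (h.trans hxz) hy
      subst hx0; subst hy0
      simp [phiF_self]
    · have := phiF_anti_left hz' ⟨hy, h.trans hxz⟩ ⟨hx, hxz⟩ h
      calc Real.sqrt (phiF x z) ≤ Real.sqrt (phiF y z) := Real.sqrt_le_sqrt this
        _ ≤ Real.sqrt (phiF x y) + Real.sqrt (phiF y z) := by
            linarith [Real.sqrt_nonneg (phiF x y)]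
  rcases le_or_gt z y with h2 | h2
  · -- x < y, z ≤ y : φ(x,z) ≤ φ(x,y)
    rcases hx.eq_or_lt with rfl | hx'
    · rw [phiF_zero, phiF_zero]
      have : Real.sqrt (z * Real.log 2) ≤ Real.sqrt (y * Real.log 2) :=
        Real.sqrt_le_sqrt (by nlinarith [Real.log_pos one_lt_two])
      linarith [Real.sqrt_nonneg (phiF y z)]
    · have hmono := phiF_mono_right hx' (Set.mem_Ici.2 hxz) (Set.mem_Ici.2 (hxz.trans h2)) h2
      calc Real.sqrt (phiF x z) ≤ Real.sqrt (phiF x y) := Real.sqrt_le_sqrt hmono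
        _ ≤ Real.sqrt (phiF x y) + Real.sqrt (phiF y z) := by
            linarith [Real.sqrt_nonneg (phiF y z)]
  · -- x < y < z
    have hypos : 0 < y := lt_of_le_of_lt hx h
    have hzpos : 0 < z := hypos.trans h2
    set F : ℝ → ℝ := fun w =>
      Real.sqrt (phiF w y) + Real.sqrt (phiF y z) - Real.sqrt (phiF w z) with hF
    have deriv_at : ∀ w ∈ Set.Ioo x y,
        HasDerivAt F
          (Real.log (2*w/(w+y)) / (2*Real.sqrt (phiF w y))
            - Real.log (2*w/(w+z)) / (2*Real.sqrt (phiF w z))) w := by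
      intro w hw
      have hwpos : 0 < w := lt_of_le_of_lt hx hw.1
      have hwy : w < y := hw.2
      have hwz : w < z := hwy.trans h2
      have d1 : HasDerivAt (fun w => Real.sqrt (phiF w y))
          (Real.log (2*w/(w+y)) / (2*Real.sqrt (phiF w y))) w := by
        have hφ : 0 < phiF w y := phiF_pos hwpos.le hypos.le hwy.ne
        have := (Real.hasDerivAt_sqrt hφ.ne').comp w (hasDerivAt_phiF_left hypos hwpos)
        refine this.congr_deriv ?_; ring
      have d2 : HasDerivAt (fun w => Real.sqrt (phiF w z))
          (Real.log (2*w/(w+z)) / (2*Real.sqrt (phiF w z))) w := by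
        have hφ : 0 < phiF w z := phiF_pos hwpos.le hzpos.le hwz.ne
        have := (Real.hasDerivAt_sqrt hφ.ne').comp w (hasDerivAt_phiF_left hzpos hwpos)
        refine this.congr_deriv ?_; ring
      exact (d1.add_const _).sub d2
    have hcont : ContinuousOn F (Set.Icc x y) := by
      have hsub : Set.Icc x y ⊆ Set.Ici (0:ℝ) := fun w hw => hx.trans hw.1
      apply ContinuousOn.sub
      apply ContinuousOn.add
      · exact (Real.continuous_sqrt.comp_continuousOn
          ((phiF_contOn_left hypos).mono hsub))
      · exact continuousOn_const
      · exact (Real.continuous_sqrt.comp_continuousOn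
          ((phiF_contOn_left hzpos).mono hsub))
    have hanti : AntitoneOn F (Set.Icc x y) := by
      apply antitoneOn_of_deriv_nonpos (convex_Icc x y) hcont
      · intro w hw
        rw [interior_Icc] at hw
        exact (deriv_at w hw).differentiableAt.differentiableWithinAt
      · intro w hw
        rw [interior_Icc] at hw
        rw [(deriv_at w hw).deriv]
        have hwpos : 0 < w := lt_of_le_of_lt hx hw.1
        have hwy : w < y := hw.2
        have hwz : w < z := hwy.trans h2
        have e1 : Real.log (2*w/(w+y)) = -Real.log ((w+y)/(2*w)) := by
          rw [← Real.log_inv, inv_div]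
        have e2 : Real.log (2*w/(w+z)) = -Real.log ((w+z)/(2*w)) := by
          rw [← Real.log_inv, inv_div]
        have hq := quot_anti hwpos hwy h2.le
        have hs1 : 0 < Real.sqrt (phiF w y) :=
          Real.sqrt_pos.2 (phiF_pos hwpos.le hypos.le hwy.ne)
        have hs2 : 0 < Real.sqrt (phiF w z) :=
          Real.sqrt_pos.2 (phiF_pos hwpos.le hzpos.le hwz.ne)
        rw [e1, e2]
        rw [div_le_div_iff₀ hs2 hs1] at hq
        rw [sub_nonpos, neg_div, neg_div, neg_le_neg_iff,
            div_le_div_iff₀ (by positivity) (by positivity)]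
        nlinarith
    have hFy : F y = 0 := by
      simp [hF, phiF_self]
    have := hanti (Set.left_mem_Icc.2 h.le) (Set.right_mem_Icc.2 h.le) h.le
    rw [hFy] at this
    simp only [hF] at this
    linarith

lemma sqrt_phiF_triangle {x y z : ℝ} (hx : 0 ≤ x) (hy : 0 ≤ y) (hz : 0 ≤ z) :
    Real.sqrt (phiF x z) ≤ Real.sqrt (phiF x y) + Real.sqrt (phiF y z) := by
  rcases le_total x z with h | h
  · exact sqrt_phiF_triangle_aux hx hy hz h
  · have := sqrt_phiF_triangle_aux hz hy hx h
    rw [phiF_symm x z, phiF_symm x y, phiF_symm y z]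
    linarith

lemma log2_pos : (0:ℝ) < Real.log 2 := Real.log_pos one_lt_two

lemma DJS_term (a b : ℝ) (ha : 0 ≤ a) (hb : 0 ≤ b) :
    (1/2)*(a * Real.logb 2 a) + (1/2)*(b * Real.logb 2 b)
      - ((a+b)/2) * Real.logb 2 ((a+b)/2) = phiF a b / (2*Real.log 2) := by
  have hl2 := log2_pos
  rcases ha.eq_or_lt with rfl | ha'
  · rcases hb.eq_or_lt with rfl | hb'
    · simp [phiF_self, Real.logb]
    · rw [phiF_zero]
      simp only [Real.logb, zero_add, Real.log_zero, mul_zero, zero_div, zero_mul]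
      rw [Real.log_div hb'.ne' two_ne_zero]
      field_simp
      ring
  · rcases hb.eq_or_lt with rfl | hb'
    · rw [phiF_symm, phiF_zero]
      simp only [Real.logb, add_zero, Real.log_zero, mul_zero, zero_div, zero_mul]
      rw [Real.log_div ha'.ne' two_ne_zero]
      field_simp
      ring
    · rw [phiF_eq_pos ha' hb']
      simp only [Real.logb]
      field_simp <;> ring

lemma DJS_eq {n : ℕ} (p q : Fin n → ℝ) (hp : ∀ i, 0 ≤ p i) (hq : ∀ i, 0 ≤ q i) :
    DJS p q = (∑ i, phiF (p i) (q i)) / (2*Real.log 2) := by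
  have step1 : DJS p q = ∑ i, ((1/2)*(p i * Real.logb 2 (p i))
      + (1/2)*(q i * Real.logb 2 (q i))
      - ((p i + q i)/2) * Real.logb 2 ((p i + q i)/2)) := by
    simp only [DJS, shannonH]
    rw [Finset.sum_sub_distrib, Finset.sum_add_distrib, ← Finset.mul_sum, ← Finset.mul_sum]
    ring
  rw [step1, Finset.sum_congr rfl fun i _ => DJS_term (p i) (q i) (hp i) (hq i),
      ← Finset.sum_div]

lemma DJS_nonneg {n : ℕ} (p q : Fin n → ℝ) (hp : ∀ i, 0 ≤ p i) (hq : ∀ i, 0 ≤ q i) :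
    0 ≤ DJS p q := by
  rw [DJS_eq p q hp hq]
  apply div_nonneg _ (by positivity)
  exact Finset.sum_nonneg fun i _ => phiF_nonneg (hp i) (hq i)

lemma DJS_eq_zero_iff {n : ℕ} (p q : Fin n → ℝ) (hp : ∀ i, 0 ≤ p i) (hq : ∀ i, 0 ≤ q i) :
    DJS p q = 0 ↔ p = q := by
  rw [DJS_eq p q hp hq, div_eq_zero_iff]
  have hl2 : (2*Real.log 2) ≠ 0 := by positivity
  constructor
  · rintro (h | h)
    · have := (Finset.sum_eq_zero_iff_of_nonneg
        (fun i _ => phiF_nonneg (hp i) (hq i))).1 h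
      funext i
      by_contra hne
      exact (phiF_pos (hp i) (hq i) hne).ne' (this i (Finset.mem_univ i))
    · exact absurd h hl2
  · rintro rfl
    left
    exact Finset.sum_eq_zero fun i _ => phiF_self (p i)

lemma DJS_symm {n : ℕ} (p q : Fin n → ℝ) : DJS p q = DJS q p := by
  simp only [DJS]
  rw [show (fun i => (p i + q i)/2) = (fun i => (q i + p i)/2) from
    funext fun i => by ring]
  ring

lemma sqrt_DJS_triangle {n : ℕ} (P Q R : Fin n → ℝ)
    (hP : ∀ i, 0 ≤ P i) (hQ : ∀ i, 0 ≤ Q i) (hR : ∀ i, 0 ≤ R i) :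
    Real.sqrt (DJS P Q) ≤ Real.sqrt (DJS P R) + Real.sqrt (DJS R Q) := by
  rw [DJS_eq P Q hP hQ, DJS_eq P R hP hR, DJS_eq R Q hR hQ]
  have hAnn : 0 ≤ ∑ i, phiF (P i) (R i) :=
    Finset.sum_nonneg fun i _ => phiF_nonneg (hP i) (hR i)
  have hBnn : 0 ≤ ∑ i, phiF (R i) (Q i) :=
    Finset.sum_nonneg fun i _ => phiF_nonneg (hR i) (hQ i)
  have hCnn : 0 ≤ ∑ i, phiF (P i) (Q i) :=
    Finset.sum_nonneg fun i _ => phiF_nonneg (hP i) (hQ i)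
  rw [Real.sqrt_div hCnn, Real.sqrt_div hAnn, Real.sqrt_div hBnn, ← add_div]
  refine div_le_div_of_nonneg_right ?_ (Real.sqrt_nonneg _)
  · have pt : ∀ i, Real.sqrt (phiF (P i) (Q i))
        ≤ Real.sqrt (phiF (P i) (R i)) + Real.sqrt (phiF (R i) (Q i)) :=
      fun i => sqrt_phiF_triangle (hP i) (hR i) (hQ i)
    have cs := Real.sum_sqrt_mul_sqrt_le Finset.univ
      (f := fun i => phiF (P i) (R i)) (g := fun i => phiF (R i) (Q i))
      (fun i => phiF_nonneg (hP i) (hR i)) (fun i => phiF_nonneg (hR i) (hQ i))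
    have expand : ∀ i, phiF (P i) (Q i) ≤ phiF (P i) (R i) + phiF (R i) (Q i)
        + 2*(Real.sqrt (phiF (P i) (R i)) * Real.sqrt (phiF (R i) (Q i))) := by
      intro i
      have h1 := pt i
      have e1 := Real.sq_sqrt (phiF_nonneg (hP i) (hQ i))
      have e2 := Real.sq_sqrt (phiF_nonneg (hP i) (hR i))
      have e3 := Real.sq_sqrt (phiF_nonneg (hR i) (hQ i))
      nlinarith [Real.sqrt_nonneg (phiF (P i) (Q i)),
        Real.sqrt_nonneg (phiF (P i) (R i)), Real.sqrt_nonneg (phiF (R i) (Q i))]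
    have hsum : ∑ i, phiF (P i) (Q i)
        ≤ (Real.sqrt (∑ i, phiF (P i) (R i)) + Real.sqrt (∑ i, phiF (R i) (Q i)))^2 := by
      calc ∑ i, phiF (P i) (Q i)
          ≤ ∑ i, (phiF (P i) (R i) + phiF (R i) (Q i)
            + 2*(Real.sqrt (phiF (P i) (R i)) * Real.sqrt (phiF (R i) (Q i)))) :=
            Finset.sum_le_sum fun i _ => expand i
        _ = (∑ i, phiF (P i) (R i)) + (∑ i, phiF (R i) (Q i))
            + 2*(∑ i, Real.sqrt (phiF (P i) (R i)) * Real.sqrt (phiF (R i) (Q i))) := by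
            rw [Finset.sum_add_distrib, Finset.sum_add_distrib, ← Finset.mul_sum]
        _ ≤ (∑ i, phiF (P i) (R i)) + (∑ i, phiF (R i) (Q i))
            + 2*(Real.sqrt (∑ i, phiF (P i) (R i)) * Real.sqrt (∑ i, phiF (R i) (Q i))) := by
            linarith [cs]
        _ = (Real.sqrt (∑ i, phiF (P i) (R i)) + Real.sqrt (∑ i, phiF (R i) (Q i)))^2 := by
            rw [add_sq, Real.sq_sqrt hAnn, Real.sq_sqrt hBnn]; ring
    calc Real.sqrt (∑ i, phiF (P i) (Q i))
        ≤ Real.sqrt ((Real.sqrt (∑ i, phiF (P i) (R i))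
          + Real.sqrt (∑ i, phiF (R i) (Q i)))^2) := Real.sqrt_le_sqrt hsum
      _ = _ := Real.sqrt_sq (by positivity)

open scoped NNReal in
lemma real_rpow_add_le {u v β : ℝ} (hu : 0 ≤ u) (hv : 0 ≤ v) (hb0 : 0 ≤ β) (hb1 : β ≤ 1) :
    (u + v) ^ β ≤ u ^ β + v ^ β := by
  have h := NNReal.rpow_add_le_add_rpow u.toNNReal v.toNNReal hb0 hb1
  have hcoe : ((u.toNNReal + v.toNNReal : ℝ≥0) : ℝ) = u + v := by
    simp [Real.coe_toNNReal u hu, Real.coe_toNNReal v hv]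
  calc (u + v) ^ β = (((u.toNNReal + v.toNNReal : ℝ≥0) : ℝ)) ^ β := by rw [hcoe]
    _ = (((u.toNNReal + v.toNNReal) ^ β : ℝ≥0) : ℝ) := by
        rw [NNReal.coe_rpow]
    _ ≤ ((u.toNNReal ^ β + v.toNNReal ^ β : ℝ≥0) : ℝ) := by exact_mod_cast h
    _ = u ^ β + v ^ β := by
        push_cast [NNReal.coe_rpow, Real.coe_toNNReal u hu, Real.coe_toNNReal v hv]
        ring

theorem stmt_0 (n : ℕ) (hn : 1 ≤ n) (P Q R : Fin n → ℝ)
    (hP : (∀ i, 0 ≤ P i) ∧ ∑ i, P i = 1)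
    (hQ : (∀ i, 0 ≤ Q i) ∧ ∑ i, Q i = 1)
    (hR : (∀ i, 0 ≤ R i) ∧ ∑ i, R i = 1)
    (α : ℝ) (hα₀ : 0 < α) (hα₁ : α ≤ 1 / 2) :
    0 ≤ dAlpha α P Q ∧
    (dAlpha α P Q = 0 ↔ P = Q) ∧
    dAlpha α P Q = dAlpha α Q P ∧
    dAlpha α P Q ≤ dAlpha α P R + dAlpha α R Q := by
  obtain ⟨hP1, -⟩ := hP
  obtain ⟨hQ1, -⟩ := hQ
  obtain ⟨hR1, -⟩ := hR
  have jPQ : 0 ≤ DJS P Q := DJS_nonneg P Q hP1 hQ1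
  have jPR : 0 ≤ DJS P R := DJS_nonneg P R hP1 hR1
  have jRQ : 0 ≤ DJS R Q := DJS_nonneg R Q hR1 hQ1
  refine ⟨Real.rpow_nonneg jPQ α, ?_, ?_, ?_⟩
  · constructor
    · intro h
      rw [dAlpha, Real.rpow_eq_zero_iff_of_nonneg jPQ] at h
      exact (DJS_eq_zero_iff P Q hP1 hQ1).1 h.1
    · intro h
      rw [dAlpha, (DJS_eq_zero_iff P Q hP1 hQ1).2 h, Real.zero_rpow hα₀.ne']
  · rw [dAlpha, dAlpha, DJS_symm]
  · -- triangle inequality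
    have htri := sqrt_DJS_triangle P Q R hP1 hQ1 hR1
    have hb0 : (0:ℝ) ≤ 2*α := by linarith
    have hb1 : 2*α ≤ 1 := by linarith
    have key : ∀ x : ℝ, 0 ≤ x → x ^ α = (Real.sqrt x) ^ (2*α) := by
      intro x hx
      rw [Real.sqrt_eq_rpow, ← Real.rpow_mul hx]
      congr 1
      ring
    rw [dAlpha, dAlpha, dAlpha, key _ jPQ, key _ jPR, key _ jRQ]
    calc (Real.sqrt (DJS P Q)) ^ (2*α)
        ≤ (Real.sqrt (DJS P R) + Real.sqrt (DJS R Q)) ^ (2*α) :=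
          Real.rpow_le_rpow (Real.sqrt_nonneg _) htri hb0
      _ ≤ (Real.sqrt (DJS P R)) ^ (2*α) + (Real.sqrt (DJS R Q)) ^ (2*α) :=
          real_rpow_add_le (Real.sqrt_nonneg _) (Real.sqrt_nonneg _) hb0 hb1
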